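/- (Uniqueness of quines) If t is a normal form of the rewrite system R over {d, e, +, ·} such that t·e ≡ t, then t = e or t = d·d. -/

import Mathlib

/-- Ground terms over constants d, e with binary operations + (add) and · (app). -/
inductive Tm : Type
  | d : Tm
  | e : Tm
  | add : Tm → Tm → Tm
  | app : Tm → Tm → Tm
  deriving DecidableEq

open Tm

/-- Root rewrite steps: instances of the oriented rules. -/
inductive Root : Tm → Tm → Prop
  | addE (x) : Root (add x e) x
  | eAdd (x) : Root (add e x) x
  | assoc (x y z) : Root (add (add x y) z) (add x (add y z))
  | appAdd (x y z) : Root (app (add x y) z) (app y (app x z))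
  | appD (x y) : Root (app (app d x) y) (app x (add y x))
  | appE (x) : Root (app e x) x
  | dE : Root (app d e) e

/-- One rewrite step: a root step applied at some subterm position. -/
inductive Step : Tm → Tm → Prop
  | root {t u} : Root t u → Step t u
  | addL {t t' u} : Step t t' → Step (add t u) (add t' u)
  | addR {t u u'} : Step u u' → Step (add t u) (add t u')
  | appL {t t' u} : Step t t' → Step (app t u) (app t' u)
  | appR {t u u'} : Step u u' → Step (app t u) (app t u')

/-- Zero or more rewrite steps. -/
def Steps : Tm → Tm → Prop := Relation.ReflTransGen Step

/-- A normal form is a term to which no rule applies. -/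
def NormalForm (t : Tm) : Prop := ∀ u, ¬ Step t u

/-- Provable equality in the equational theory (reflexive symmetric transitive
congruence closure of the rule instances). -/
def TermEq : Tm → Tm → Prop := Relation.EqvGen Step

/-! ### The termination measure -/

def mu : Tm → ℕ
  | d => 2
  | e => 2
  | add x y => 2 * mu x + mu y
  | app x y => 2 ^ mu x * mu y

lemma two_le_mu (t : Tm) : 2 ≤ mu t := by
  induction t with
  | d => simp [mu]
  | e => simp [mu]
  | add x y ihx ihy => simp only [mu]; omega
  | app x y ihx ihy =>
    simp only [mu]
    calc 2 ≤ 1 * mu y := by omega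
    _ ≤ 2 ^ mu x * mu y := by
        exact Nat.mul_le_mul_right _ (Nat.one_le_two_pow)

lemma appD_key {a b : ℕ} (ha : 2 ≤ a) (hb : 2 ≤ b) :
    2 ^ a * (2 * b + a) < 2 ^ (2 ^ 2 * a) * b := by
  have h1 : a < 2 ^ a := Nat.lt_two_pow_self
  have h2 : 2 * b + a < 2 ^ (a + 1) * b := by
    have : 2 * b + a < 2 * b + 2 ^ a * b :=
      lt_of_lt_of_le (by omega : 2 * b + a < 2 * b + 2 ^ a)
        (by nlinarith [Nat.one_le_two_pow (n := a)])
    calc 2 * b + a < 2 * b + 2 ^ a * b := this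
      _ ≤ 2 ^ a * b + 2 ^ a * b := by
          have : 2 ≤ 2 ^ a := by
            calc 2 = 2 ^ 1 := rfl
            _ ≤ 2 ^ a := Nat.pow_le_pow_right (by norm_num) (by omega)
          nlinarith
      _ = 2 ^ (a + 1) * b := by ring
  have h3 : 2 ^ (a + 1) * b ≤ 2 ^ (3 * a) * b :=
    Nat.mul_le_mul_right _ (Nat.pow_le_pow_right (by norm_num) (by omega))
  calc 2 ^ a * (2 * b + a) < 2 ^ a * (2 ^ (3 * a) * b) := by
        have h4 := lt_of_lt_of_le h2 h3
        exact Nat.mul_lt_mul_of_le_of_lt (le_refl _) h4 (by positivity)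
  _ = 2 ^ (2 ^ 2 * a) * b := by rw [← mul_assoc, ← pow_add]; ring_nf

lemma mu_root {t u : Tm} (h : Root t u) : mu u < mu t := by
  cases h with
  | addE x => simp only [mu]; have := two_le_mu u; omega
  | eAdd x => simp only [mu]; omega
  | assoc x y z => simp only [mu]; have := two_le_mu x; omega
  | appAdd x y z =>
    simp only [mu]
    rw [← mul_assoc, ← pow_add]
    have hx := two_le_mu x
    have hz := two_le_mu z
    have hlt : mu y + mu x < 2 * mu x + mu y := by omega
    exact Nat.mul_lt_mul_of_lt_of_le (Nat.pow_lt_pow_right (by norm_num) hlt) (le_refl _) (by omega)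
  | appD x y =>
    simp only [mu]
    exact appD_key (two_le_mu x) (two_le_mu y)
  | appE x =>
    simp only [mu]
    have := two_le_mu u; omega
  | dE => simp [mu]

lemma mu_step {t u : Tm} (h : Step t u) : mu u < mu t := by
  induction h with
  | root hr => exact mu_root hr
  | addL _ ih => simp only [mu]; omega
  | addR _ ih => simp only [mu]; omega
  | appL h ih =>
    simp only [mu]
    exact Nat.mul_lt_mul_of_lt_of_le (Nat.pow_lt_pow_right (by norm_num) ih) (le_refl _)
      (Nat.lt_of_lt_of_le (by norm_num) (two_le_mu _))
  | appR h ih =>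
    simp only [mu]
    exact Nat.mul_lt_mul_of_le_of_lt (le_refl _) ih (by positivity)

lemma mu_steps {t u : Tm} (h : Steps t u) : mu u ≤ mu t := by
  induction h with
  | refl => exact le_refl _
  | tail _ h ih => exact le_trans (mu_step h).le ih
/-! ### Basic step facts and congruence closure -/

lemma no_step_e {u : Tm} : ¬ Step e u := by
  intro h; cases h with | root hr => cases hr

lemma no_step_d {u : Tm} : ¬ Step d u := by
  intro h; cases h with | root hr => cases hr

lemma steps_addL {a a' b : Tm} (h : Steps a a') : Steps (add a b) (add a' b) :=
  Relation.ReflTransGen.lift (fun t => add t b) (fun _ _ hs => Step.addL hs) _ _ h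

lemma steps_addR {a b b' : Tm} (h : Steps b b') : Steps (add a b) (add a b') :=
  Relation.ReflTransGen.lift (fun t => add a t) (fun _ _ hs => Step.addR hs) _ _ h

lemma steps_appL {a a' b : Tm} (h : Steps a a') : Steps (app a b) (app a' b) :=
  Relation.ReflTransGen.lift (fun t => app t b) (fun _ _ hs => Step.appL hs) _ _ h

lemma steps_appR {a b b' : Tm} (h : Steps b b') : Steps (app a b) (app a b') :=
  Relation.ReflTransGen.lift (fun t => app a t) (fun _ _ hs => Step.appR hs) _ _ h

def Joinable (a b : Tm) : Prop := ∃ c, Steps a c ∧ Steps b c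

lemma Joinable.symm {a b : Tm} (h : Joinable a b) : Joinable b a := by
  obtain ⟨c, h1, h2⟩ := h; exact ⟨c, h2, h1⟩

lemma Joinable.refl (a : Tm) : Joinable a a := ⟨a, .refl, .refl⟩

open Relation.ReflTransGen in
/-- Critical pair analysis: a root step and any other step from the same term join. -/
lemma root_conf {t u v : Tm} (hr : Root t u) (hs : Step t v) : Joinable u v := by
  cases hr with
  | addE x =>
    cases hs with
    | root hr2 =>
      cases hr2 with
      | addE => exact .refl _
      | eAdd => exact .refl _
      | assoc a b =>
        exact ⟨add a b, .refl, single (Step.addR (Step.root (Root.addE b)))⟩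
    | addL h => exact ⟨_, single h, single (Step.root (Root.addE _))⟩
    | addR h => exact absurd h no_step_e
  | eAdd x =>
    cases hs with
    | root hr2 =>
      cases hr2 with
      | addE => exact .refl _
      | eAdd => exact .refl _
    | addL h => exact absurd h no_step_e
    | addR h => exact ⟨_, single h, single (Step.root (Root.eAdd _))⟩
  | assoc x y z =>
    cases hs with
    | root hr2 =>
      cases hr2 with
      | addE => exact ⟨add x y, single (Step.addR (Step.root (Root.addE y))), .refl⟩
      | assoc => exact .refl _
    | addL h =>
      cases h with
      | root hr3 =>
        cases hr3 with
        | addE =>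
          exact ⟨add x z, single (Step.addR (Step.root (Root.eAdd z))), .refl⟩
        | eAdd =>
          exact ⟨add y z, single (Step.root (Root.eAdd _)), .refl⟩
        | assoc a b =>
          refine ⟨add a (add b (add y z)), ?_, ?_⟩
          · exact single (Step.root (Root.assoc a b (add y z)))
          · exact (single (Step.root (Root.assoc a (add b y) z))).trans
              (single (Step.addR (Step.root (Root.assoc b y z))))
      | addL h2 =>
        exact ⟨add _ (add y z), single (Step.addL h2), single (Step.root (Root.assoc _ y z))⟩
      | addR h2 =>
        exact ⟨add x (add _ z), single (Step.addR (Step.addL h2)),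
          single (Step.root (Root.assoc x _ z))⟩
    | addR h =>
      exact ⟨add x (add y _), single (Step.addR (Step.addR h)),
        single (Step.root (Root.assoc x y _))⟩
  | appAdd x y z =>
    cases hs with
    | root hr2 =>
      cases hr2 with
      | appAdd => exact .refl _
    | appL h =>
      cases h with
      | root hr3 =>
        cases hr3 with
        | addE => exact ⟨app x z, single (Step.root (Root.appE _)), .refl⟩
        | eAdd => exact ⟨app y z, single (Step.appR (Step.root (Root.appE z))), .refl⟩
        | assoc a b =>
          refine ⟨app y (app b (app a z)), ?_, ?_⟩
          · exact single (Step.appR (Step.root (Root.appAdd a b z)))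
          · exact (single (Step.root (Root.appAdd a (add b y) z))).trans
              (single (Step.root (Root.appAdd b y (app a z))))
      | addL h2 =>
        exact ⟨app y (app _ z), single (Step.appR (Step.appL h2)),
          single (Step.root (Root.appAdd _ y z))⟩
      | addR h2 =>
        exact ⟨app _ (app x z), single (Step.appL h2),
          single (Step.root (Root.appAdd x _ z))⟩
    | appR h =>
      exact ⟨app y (app x _), single (Step.appR (Step.appR h)),
        single (Step.root (Root.appAdd x y _))⟩
  | appD x y =>
    cases hs with
    | root hr2 =>
      cases hr2 with
      | appD => exact .refl _
    | appL h =>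
      cases h with
      | root hr3 =>
        cases hr3 with
        | dE =>
          refine ⟨y, ?_, single (Step.root (Root.appE y))⟩
          exact (single (Step.root (Root.appE (add y e)))).trans
            (single (Step.root (Root.addE y)))
      | appL h2 => exact absurd h2 no_step_d
      | appR h2 =>
        refine ⟨app _ (add y _), ?_, single (Step.root (Root.appD _ y))⟩
        exact (single (Step.appL h2)).trans (single (Step.appR (Step.addR h2)))
    | appR h =>
      exact ⟨app x (add _ x), single (Step.appR (Step.addL h)),
        single (Step.root (Root.appD x _))⟩
  | appE x =>
    cases hs with
    | root hr2 =>
      cases hr2 with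
      | appE => exact .refl _
    | appL h => exact absurd h no_step_e
    | appR h => exact ⟨_, single h, single (Step.root (Root.appE _))⟩
  | dE =>
    cases hs with
    | root hr2 =>
      cases hr2 with
      | dE => exact .refl _
    | appL h => exact absurd h no_step_d
    | appR h => exact absurd h no_step_e

open Relation.ReflTransGen in
/-- Local confluence. -/
lemma local_conf {t u v : Tm} (hu : Step t u) (hv : Step t v) : Joinable u v := by
  induction hu generalizing v with
  | root hr => exact root_conf hr hv
  | @addL a a' b h ih =>
    cases hv with
    | root hr => exact (root_conf hr (Step.addL h)).symm
    | addL h2 => obtain ⟨c, h1, h2'⟩ := ih h2; exact ⟨add c b, steps_addL h1, steps_addL h2'⟩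
    | addR h2 =>
      exact ⟨add a' _, single (Step.addR h2), single (Step.addL h)⟩
  | @addR a b b' h ih =>
    cases hv with
    | root hr => exact (root_conf hr (Step.addR h)).symm
    | addL h2 =>
      exact ⟨add _ b', single (Step.addL h2), single (Step.addR h)⟩
    | addR h2 => obtain ⟨c, h1, h2'⟩ := ih h2; exact ⟨add a c, steps_addR h1, steps_addR h2'⟩
  | @appL a a' b h ih =>
    cases hv with
    | root hr => exact (root_conf hr (Step.appL h)).symm
    | appL h2 => obtain ⟨c, h1, h2'⟩ := ih h2; exact ⟨app c b, steps_appL h1, steps_appL h2'⟩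
    | appR h2 =>
      exact ⟨app a' _, single (Step.appR h2), single (Step.appL h)⟩
  | @appR a b b' h ih =>
    cases hv with
    | root hr => exact (root_conf hr (Step.appR h)).symm
    | appL h2 =>
      exact ⟨app _ b', single (Step.appL h2), single (Step.appR h)⟩
    | appR h2 => obtain ⟨c, h1, h2'⟩ := ih h2; exact ⟨app a c, steps_appR h1, steps_appR h2'⟩
/-! ### Confluence (Newman) and normal forms -/

lemma confluence : ∀ {a b c : Tm}, Steps a b → Steps a c → Joinable b c := by
  have key : ∀ n (a b c : Tm), mu a ≤ n → Steps a b → Steps a c → Joinable b c := by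
    intro n
    induction n with
    | zero => intro a b c h; have := two_le_mu a; omega
    | succ n ih =>
      intro a b c hle hab hac
      rcases hab.cases_head with rfl | ⟨b1, hb1, hb1s⟩
      · exact ⟨c, hac, .refl⟩
      rcases hac.cases_head with rfl | ⟨c1, hc1, hc1s⟩
      · exact ⟨b, .refl, Relation.ReflTransGen.head hb1 hb1s⟩
      obtain ⟨d0, hbd0, hcd0⟩ := local_conf hb1 hc1
      obtain ⟨d1, hbd1, hd0d1⟩ := ih b1 b d0 (by have := mu_step hb1; omega) hb1s hbd0
      obtain ⟨d2, hcd2, hd1d2⟩ := ih c1 c d1 (by have := mu_step hc1; omega) hc1s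
        (hcd0.trans hd0d1)
      exact ⟨d2, hbd1.trans hd1d2, hcd2⟩
  intro a b c hab hac
  exact key (mu a) a b c (le_refl _) hab hac

lemma termEq_joinable {a b : Tm} (h : TermEq a b) : Joinable a b := by
  induction h with
  | rel _ _ h => exact ⟨_, Relation.ReflTransGen.single h, .refl⟩
  | refl => exact Joinable.refl _
  | symm _ _ _ ih => exact ih.symm
  | trans a b c _ _ ih1 ih2 =>
    obtain ⟨x, hax, hbx⟩ := ih1
    obtain ⟨y, hby, hcy⟩ := ih2
    obtain ⟨z, hxz, hyz⟩ := confluence hbx hby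
    exact ⟨z, hax.trans hxz, hcy.trans hyz⟩

lemma steps_normal_eq {a b : Tm} (ha : NormalForm a) (h : Steps a b) : a = b := by
  rcases h.cases_head with rfl | ⟨c, hc, _⟩
  · rfl
  · exact absurd hc (ha c)

lemma exists_nf : ∀ t : Tm, ∃ n, Steps t n ∧ NormalForm n := by
  have key : ∀ N (t : Tm), mu t ≤ N → ∃ n, Steps t n ∧ NormalForm n := by
    intro N
    induction N with
    | zero => intro t h; have := two_le_mu t; omega
    | succ N ih =>
      intro t hle
      by_cases h : NormalForm t
      · exact ⟨t, .refl, h⟩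
      · simp only [NormalForm, not_forall, not_not] at h
        obtain ⟨u, hu⟩ := h
        obtain ⟨n, hn1, hn2⟩ := ih u (by have := mu_step hu; omega)
        exact ⟨n, Relation.ReflTransGen.head hu hn1, hn2⟩
  intro t; exact key (mu t) t (le_refl _)

noncomputable def nf (t : Tm) : Tm := (exists_nf t).choose

lemma steps_nf (t : Tm) : Steps t (nf t) := (exists_nf t).choose_spec.1

lemma nf_normal (t : Tm) : NormalForm (nf t) := (exists_nf t).choose_spec.2

lemma nf_eq_of_steps {a b : Tm} (h : Steps a b) : nf a = nf b := by
  obtain ⟨c, h1, h2⟩ := confluence (steps_nf a) (h.trans (steps_nf b))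
  rw [steps_normal_eq (nf_normal a) h1, steps_normal_eq (nf_normal b) h2]

lemma nf_eq_self {t : Tm} (h : NormalForm t) : nf t = t :=
  (steps_normal_eq h (steps_nf t)).symm

lemma nf_eq_of_termEq {a b : Tm} (h : TermEq a b) : nf a = nf b := by
  obtain ⟨c, h1, h2⟩ := termEq_joinable h
  rw [nf_eq_of_steps h1, nf_eq_of_steps h2]

/-! ### Building and destructing normal forms -/

lemma normal_add_inv {a b : Tm} (h : NormalForm (add a b)) :
    NormalForm a ∧ NormalForm b ∧ a ≠ e ∧ b ≠ e ∧ ∀ p q, a ≠ add p q := by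
  refine ⟨fun u hu => h _ (Step.addL hu), fun u hu => h _ (Step.addR hu), ?_, ?_, ?_⟩
  · rintro rfl; exact h _ (Step.root (Root.eAdd b))
  · rintro rfl; exact h _ (Step.root (Root.addE a))
  · rintro p q rfl; exact h _ (Step.root (Root.assoc p q b))

lemma normal_app_inv {a b : Tm} (h : NormalForm (app a b)) :
    NormalForm a ∧ NormalForm b ∧ a ≠ e ∧ (∀ p q, a ≠ add p q) ∧ (∀ q, a ≠ app d q) ∧
      (a = d → b ≠ e) := by
  refine ⟨fun u hu => h _ (Step.appL hu), fun u hu => h _ (Step.appR hu), ?_, ?_, ?_, ?_⟩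
  · rintro rfl; exact h _ (Step.root (Root.appE b))
  · rintro p q rfl; exact h _ (Step.root (Root.appAdd p q b))
  · rintro q rfl; exact h _ (Step.root (Root.appD q b))
  · rintro rfl rfl; exact h _ (Step.root Root.dE)

lemma normal_add_mk {a b : Tm} (ha : NormalForm a) (hb : NormalForm b) (hae : a ≠ e)
    (hbe : b ≠ e) (hadd : ∀ p q, a ≠ add p q) : NormalForm (add a b) := by
  intro u hu
  cases hu with
  | root hr =>
    cases hr with
    | addE => exact hbe rfl
    | eAdd => exact hae rfl
    | assoc p q z => exact hadd p q rfl
  | addL h => exact ha _ h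
  | addR h => exact hb _ h

lemma normal_app_mk {a b : Tm} (ha : NormalForm a) (hb : NormalForm b) (hae : a ≠ e)
    (hadd : ∀ p q, a ≠ add p q) (happ : ∀ q, a ≠ app d q) (hde : a = d → b ≠ e) :
    NormalForm (app a b) := by
  intro u hu
  cases hu with
  | root hr =>
    cases hr with
    | appAdd p q z => exact hadd p q rfl
    | appD q z => exact happ q rfl
    | appE => exact hae rfl
    | dE => exact hde rfl rfl
  | appL h => exact ha _ h
  | appR h => exact hb _ h

lemma normal_d : NormalForm d := fun _ h => no_step_d h
lemma normal_e : NormalForm e := fun _ h => no_step_e h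

/-! ### Computation rules for nf -/

lemma nf_app_e {Y : Tm} (hY : NormalForm Y) : nf (app e Y) = Y := by
  rw [nf_eq_of_steps (Relation.ReflTransGen.single (Step.root (Root.appE Y))), nf_eq_self hY]

lemma nf_app_d_e : nf (app d e) = e := by
  rw [nf_eq_of_steps (Relation.ReflTransGen.single (Step.root Root.dE)), nf_eq_self normal_e]

lemma nf_app_d {Y : Tm} (hY : NormalForm Y) (hYe : Y ≠ e) : nf (app d Y) = app d Y :=
  nf_eq_self (normal_app_mk normal_d hY (by simp) (by simp) (by simp) (fun _ => hYe))

lemma nf_app_add {x1 x2 Y : Tm} :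
    nf (app (add x1 x2) Y) = nf (app x2 (nf (app x1 Y))) := by
  have h1 : Steps (app (add x1 x2) Y) (app x2 (nf (app x1 Y))) :=
    Relation.ReflTransGen.head (Step.root (Root.appAdd x1 x2 Y))
      (steps_appR (steps_nf (app x1 Y)))
  rw [nf_eq_of_steps h1]

lemma nf_app_appd {q Y : Tm} :
    nf (app (app d q) Y) = nf (app q (nf (add Y q))) := by
  have h1 : Steps (app (app d q) Y) (app q (nf (add Y q))) :=
    Relation.ReflTransGen.head (Step.root (Root.appD q Y))
      (steps_appR (steps_nf (add Y q)))
  rw [nf_eq_of_steps h1]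

lemma nf_add_e {q : Tm} (hq : NormalForm q) : nf (add e q) = q := by
  rw [nf_eq_of_steps (Relation.ReflTransGen.single (Step.root (Root.eAdd q))), nf_eq_self hq]

/-- Structure of normalized sums `nf (add Y q)` for normal `Y`, `q` with `q ≠ e`. -/
lemma nf_add_facts : ∀ (Y : Tm), NormalForm Y → ∀ (q : Tm), NormalForm q → q ≠ e →
    (Y = e → nf (add Y q) = q) ∧ (Y ≠ e → ∃ a b, nf (add Y q) = add a b) ∧
    (Y ≠ e → mu Y < mu (nf (add Y q))) ∧ mu q ≤ mu (nf (add Y q)) ∧ nf (add Y q) ≠ e := by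
  intro Y
  induction Y with
  | e =>
    intro _ q hq hqe
    rw [nf_add_e hq]
    exact ⟨fun _ => rfl, fun h => absurd rfl h, fun h => absurd rfl h, le_refl _, hqe⟩
  | d =>
    intro _ q hq hqe
    have : nf (add d q) = add d q :=
      nf_eq_self (normal_add_mk normal_d hq (by simp) hqe (by simp))
    rw [this]
    refine ⟨by simp, fun _ => ⟨d, q, rfl⟩, fun _ => ?_, ?_, by simp⟩
    · simp only [mu]; omega
    · simp only [mu]; omega
  | app a b iha ihb =>
    intro hY q hq hqe
    have : nf (add (app a b) q) = add (app a b) q :=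
      nf_eq_self (normal_add_mk hY hq (by simp) hqe (by simp))
    rw [this]
    refine ⟨by simp, fun _ => ⟨app a b, q, rfl⟩, fun _ => ?_, ?_, by simp⟩
    · simp only [mu]; have := two_le_mu (app a b); have := two_le_mu q; omega
    · simp only [mu]; omega
  | add y1 y2 ih1 ih2 =>
    intro hY q hq hqe
    obtain ⟨hy1, hy2, hy1e, hy2e, hy1add⟩ := normal_add_inv hY
    obtain ⟨_, hV2add, hV2mu, hV2q, hV2e⟩ := ih2 hy2 q hq hqe
    set V2 := nf (add y2 q) with hV2def
    have hVeq : nf (add (add y1 y2) q) = add y1 V2 := by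
      have hsteps : Steps (add (add y1 y2) q) (add y1 V2) :=
        Relation.ReflTransGen.head (Step.root (Root.assoc y1 y2 q))
          (steps_addR (steps_nf (add y2 q)))
      rw [nf_eq_of_steps hsteps]
      exact nf_eq_self (normal_add_mk hy1 (nf_normal _) hy1e hV2e hy1add)
    rw [hVeq]
    refine ⟨by simp, fun _ => ⟨y1, V2, rfl⟩, fun _ => ?_, ?_, by simp⟩
    · simp only [mu]; have := hV2mu hy2e; omega
    · simp only [mu]; omega
/-! ### Structure of normalized applications -/

lemma mu_lt_app_right (a b : Tm) : mu b < mu (app a b) := by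
  simp only [mu]
  have h1 : 2 ≤ 2 ^ mu a := by
    calc 2 = 2 ^ 1 := rfl
    _ ≤ 2 ^ mu a := Nat.pow_le_pow_right (by norm_num) (by have := two_le_mu a; omega)
  have h2 := two_le_mu b
  nlinarith

lemma mu_lt_app_left (a b : Tm) : mu a < mu (app a b) := by
  simp only [mu]
  have h1 := (Nat.lt_two_pow_self (n := mu a))
  have h2 := two_le_mu b
  nlinarith

lemma mu_gt_two {t : Tm} (h1 : t ≠ d) (h2 : t ≠ e) : 2 < mu t := by
  cases t with
  | d => exact absurd rfl h1
  | e => exact absurd rfl h2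
  | add a b => simp only [mu]; have := two_le_mu a; have := two_le_mu b; omega
  | app a b =>
    have := mu_lt_app_right a b
    have := two_le_mu b
    omega

lemma main_facts : ∀ (n : ℕ) (X Y : Tm), NormalForm X → NormalForm Y → mu (app X Y) ≤ n →
    (nf (app X Y) = Y ∨ mu Y < mu (nf (app X Y))) ∧
    (nf (app X Y) = Y → X = e ∨ Y = e) ∧
    (nf (app X Y) = e → Y = e) ∧
    (nf (app X Y) = d → Y = d) ∧
    (∀ a b, nf (app X Y) = add a b → nf (app X Y) = Y) ∧
    (∀ Z, nf (app X Y) = app d Z →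
      nf (app X Y) = Y ∨ (X = d ∧ Z = Y) ∨ (Y = e ∧ Z = d) ∨ mu Y < mu Z) := by
  intro n
  induction n with
  | zero => intro X Y _ _ h; have := two_le_mu (app X Y); omega
  | succ n ih =>
    intro X Y hX hY hle
    cases X with
    | e =>
      rw [nf_app_e hY]
      exact ⟨Or.inl rfl, fun _ => Or.inl rfl, id, id, fun _ _ _ => rfl, fun _ _ => Or.inl rfl⟩
    | d =>
      by_cases hYe : Y = e
      · subst hYe
        rw [nf_app_d_e]
        refine ⟨Or.inl rfl, fun _ => Or.inr rfl, fun _ => rfl, fun h => h,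
          fun a b h => by simp at h, fun Z h => by simp at h⟩
      · rw [nf_app_d hY hYe]
        have hmu : mu Y < mu (app d Y) := mu_lt_app_right d Y
        refine ⟨Or.inr hmu, ?_, ?_, ?_, ?_, ?_⟩
        · intro h; have := congrArg mu h; omega
        · intro h; simp at h
        · intro h; simp at h
        · intro a b h; simp at h
        · intro Z h
          injection h with h1 h2
          exact Or.inr (Or.inl ⟨rfl, h2.symm⟩)
    | add x1 x2 =>
      obtain ⟨hx1, hx2, hx1e, hx2e, hx1add⟩ := normal_add_inv hX
      rw [nf_app_add]
      have hWn : NormalForm (nf (app x1 Y)) := nf_normal _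
      -- measure bookkeeping
      have hs0 : mu (app x2 (app x1 Y)) < mu (app (add x1 x2) Y) :=
        mu_step (Step.root (Root.appAdd x1 x2 Y))
      have hb1 : mu (app x1 Y) ≤ n := by
        have := mu_lt_app_right x2 (app x1 Y); omega
      have hb2 : mu (app x2 (nf (app x1 Y))) ≤ n := by
        have : mu (app x2 (nf (app x1 Y))) ≤ mu (app x2 (app x1 Y)) :=
          mu_steps (steps_appR (steps_nf (app x1 Y)))
        omega
      obtain ⟨S1, H01, E01, D01, H11, H21⟩ := ih x1 Y hx1 hY hb1
      obtain ⟨S2, H02, E02, D02, H12, H22⟩ := ih x2 (nf (app x1 Y)) hx2 hWn hb2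
      set W := nf (app x1 Y) with hWdef
      set R := nf (app x2 W) with hRdef
      have mW : mu Y ≤ mu W := by
        rcases S1 with h | h
        · exact le_of_eq (congrArg mu h).symm
        · exact h.le
      have mR : mu W ≤ mu R := by
        rcases S2 with h | h
        · exact le_of_eq (congrArg mu h).symm
        · exact h.le
      refine ⟨?_, ?_, ?_, ?_, ?_, ?_⟩
      · -- S'
        rcases S2 with h2 | h2
        · rcases S1 with h1 | h1
          · exact Or.inl (h2.trans h1)
          · right; rw [h2]; exact h1
        · exact Or.inr (lt_of_le_of_lt mW h2)
      · -- H0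
        intro hRY
        rcases S2 with h2 | h2
        · rcases H02 h2 with h3 | h3
          · exact absurd h3 hx2e
          · exact Or.inr (by rw [← hRY, h2, h3])
        · have := congrArg mu hRY; omega
      · -- E0
        intro h; exact E01 (E02 h)
      · -- D0
        intro h; exact D01 (D02 h)
      · -- H1
        intro a b h
        have h2 := H12 a b h
        have h3 : W = add a b := by rw [← h2]; exact h
        exact h2.trans (H11 a b h3)
      · -- H2
        intro Z h
        rcases H22 Z h with h2 | ⟨hx2d, hZW⟩ | ⟨hWe, hZd⟩ | h2
        · have hW : W = app d Z := by rw [← h2]; exact h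
          rcases H21 Z hW with h3 | ⟨hx1d, hZY⟩ | ⟨hYe, hZd⟩ | h3
          · exact Or.inl (h2.trans h3)
          · -- W = app d Y and nf (app x2 W) = W : impossible
            rcases H02 h2 with h4 | h4
            · exact absurd h4 hx2e
            · rw [h4] at hW; simp at hW
          · exact Or.inr (Or.inr (Or.inl ⟨hYe, hZd⟩))
          · exact Or.inr (Or.inr (Or.inr h3))
        · rcases S1 with h1 | h1
          · rcases H01 h1 with h3 | h3
            · exact absurd h3 hx1e
            · -- Y = e, so W = e, so R = nf (app d e) = e ≠ app d Z
              have hWe : W = e := h1.trans h3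
              rw [hx2d, hWe, nf_app_d_e] at hRdef
              rw [hRdef] at h; simp at h
          · right; right; right; rw [hZW]; exact h1
        · exact Or.inr (Or.inr (Or.inl ⟨E01 hWe, hZd⟩))
        · exact Or.inr (Or.inr (Or.inr (lt_of_le_of_lt mW h2)))
    | app u v =>
      obtain ⟨hu, hv, hue, huadd, hudq, hde⟩ := normal_app_inv hX
      by_cases hud : u = d
      · subst hud
        have hve : v ≠ e := hde rfl
        rw [nf_app_appd]
        obtain ⟨hVe1, hVadd, hVmu, hVq, hVne⟩ := nf_add_facts Y hY v hv hve
        have hVn : NormalForm (nf (add Y v)) := nf_normal _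
        have hs0 : mu (app v (add Y v)) < mu (app (app d v) Y) :=
          mu_step (Step.root (Root.appD v Y))
        have hb1 : mu (app v (nf (add Y v))) ≤ n := by
          have : mu (app v (nf (add Y v))) ≤ mu (app v (add Y v)) :=
            mu_steps (steps_appR (steps_nf (add Y v)))
          omega
        obtain ⟨S1, H01, E01, D01, H11, H21⟩ := ih v (nf (add Y v)) hv hVn hb1
        set V := nf (add Y v) with hVdef
        set R := nf (app v V) with hRdef
        have mYV : mu Y ≤ mu V := by
          by_cases hYe : Y = e
          · rw [hYe, hVe1 hYe]; exact (two_le_mu v)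
          · exact (hVmu hYe).le
        refine ⟨?_, ?_, ?_, ?_, ?_, ?_⟩
        · -- S'
          rcases S1 with h1 | h1
          · by_cases hYe : Y = e
            · have hVv := hVe1 hYe
              by_cases hvd : v = d
              · -- then R = nf (app d d) = app d d ≠ V = d
                exfalso
                rw [hVv, hvd, nf_app_d normal_d (by simp)] at hRdef
                have : app d d = d := hRdef.symm.trans (h1.trans (hVv.trans hvd))
                simp at this
              · right
                rw [h1, hVv, hYe]
                simp only [mu]
                exact mu_gt_two hvd hve
            · right; rw [h1]; exact hVmu hYe
          · exact Or.inr (lt_of_le_of_lt mYV h1)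
        · -- H0
          intro hRY
          exfalso
          rcases S1 with h1 | h1
          · have hVY : V = Y := by rw [← h1]; exact hRY
            by_cases hYe : Y = e
            · exact hVne (hVY.trans hYe)
            · have := hVmu hYe
              rw [hVY] at this; omega
          · have := congrArg mu hRY
            omega
        · -- E0
          intro h; exact absurd (E01 h) hVne
        · -- D0
          intro h
          have hVd := D01 h
          by_cases hYe : Y = e
          · have hVv := hVe1 hYe
            have hvd : v = d := hVv.symm.trans hVd
            rw [hvd, hVd, nf_app_d normal_d (by simp)] at hRdef
            rw [hRdef] at h; simp at h
          · obtain ⟨a, b, hab⟩ := hVadd hYe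
            rw [hVd] at hab; simp at hab
        · -- H1
          intro a b h
          have h2 := H11 a b h
          rcases H01 h2 with h3 | h3
          · exact absurd h3 hve
          · exact absurd h3 hVne
        · -- H2
          intro Z h
          rcases H21 Z h with h1 | ⟨hvd, hZV⟩ | ⟨hVe, hZd⟩ | h1
          · rcases H01 h1 with h3 | h3
            · exact absurd h3 hve
            · exact absurd h3 hVne
          · by_cases hYe : Y = e
            · have hVv := hVe1 hYe
              exact Or.inr (Or.inr (Or.inl ⟨hYe, hZV.trans (hVv.trans hvd)⟩))
            · right; right; right; rw [hZV]; exact hVmu hYe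
          · exact absurd hVe hVne
          · exact Or.inr (Or.inr (Or.inr (lt_of_le_of_lt mYV h1)))
      · -- u is not d : app (app u v) Y is itself normal
        have hXn : NormalForm (app (app u v) Y) := by
          apply normal_app_mk hX hY (by simp) (by simp) ?_ (by simp)
          intro q hq
          injection hq with h1 h2
          exact hud h1
        rw [nf_eq_self hXn]
        have hmu := mu_lt_app_right (app u v) Y
        refine ⟨Or.inr hmu, ?_, ?_, ?_, ?_, ?_⟩
        · intro h; have := congrArg mu h; omega
        · intro h; simp at h
        · intro h; simp at h
        · intro a b h; simp at h
        · intro Z h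
          injection h with h1 h2
          exact absurd h1 (by simp)
/-- uniqueness of quines: a normal form t with t·e ≡ t is
either e or d·d. -/
theorem quine_unique :
    ∀ t : Tm, NormalForm t → TermEq (app t e) t → t = e ∨ t = app d d := by
  intro t ht heq
  have hnf : nf (app t e) = t := by rw [nf_eq_of_termEq heq, nf_eq_self ht]
  cases t with
  | e => exact Or.inl rfl
  | d =>
    rw [nf_app_d_e] at hnf
    simp at hnf
  | add a b =>
    exfalso
    obtain ⟨_, _, _, _, H1, _⟩ :=
      main_facts (mu (app (add a b) e)) (add a b) e ht normal_e (le_refl _)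
    have := H1 a b hnf
    rw [hnf] at this
    simp at this
  | app u v =>
    obtain ⟨hu, hv, hue, huadd, hudq, hde⟩ := normal_app_inv ht
    by_cases hud : u = d
    · subst hud
      have hve : v ≠ e := hde rfl
      -- app (app d v) e →* app v v
      have hs : Steps (app (app d v) e) (app v v) :=
        Relation.ReflTransGen.head (Step.root (Root.appD v e))
          (Relation.ReflTransGen.single (Step.appR (Step.root (Root.eAdd v))))
      have h2 : nf (app v v) = app d v := by
        rw [← nf_eq_of_steps hs]; exact hnf
      obtain ⟨_, _, _, _, _, H2⟩ :=
        main_facts (mu (app v v)) v v hv hv (le_refl _)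
      rcases H2 v h2 with h3 | ⟨hvd, _⟩ | ⟨hve', _⟩ | h3
      · -- app d v = v : impossible by measure
        exfalso
        rw [h2] at h3
        have := congrArg mu h3
        have := mu_lt_app_right d v
        omega
      · right; rw [hvd]
      · exact absurd hve' hve
      · exact absurd h3 (lt_irrefl _)
    · -- app t e is itself normal, contradiction
      exfalso
      have hXn : NormalForm (app (app u v) e) := by
        apply normal_app_mk ht normal_e (by simp) (by simp) ?_ (by simp)
        intro q hq
        injection hq with h1 h2
        exact hud h1
      rw [nf_eq_self hXn] at hnf
      have h1 := congrArg mu hnf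
      have h2 := mu_lt_app_left (app u v) e
      omega
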